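/- Geometrically weighted Gamma-ratio sum decays at rate i^{−2} (Lemma 7): Let λ > 0 and μ > 0 with λμ not an integer greater than or equal to 2 (so Γ(j+1−λμ) is finite and nonzero for all integers j ≥ 1), and let 0 < ρ < 1. Then ρ / log(ρ^{−1}) ≤ liminf_{i→∞} i^{2−2λμ} ∑_{j=1}^{i−1} ρ^{i−j} ( Γ(j) / Γ(j+1−λμ) )² and limsup_{i→∞} i^{2−2λμ} ∑_{j=1}^{i−1} ρ^{i−j} ( Γ(j) / Γ(j+1−λμ) )² ≤ 1 / log(ρ^{−1}). In particular the sequence i^{−2λμ} ∑_{j=1}^{i−1} ρ^{i−j} (Γ(j)/Γ(j+1−λμ))² is Θ(i^{−2}) as i → ∞. -/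

import Mathlib

open Filter Topology

private lemma aux_ratio_tendsto_one (c : ℝ) :
    Tendsto (fun n : ℕ => ((n : ℝ) + c) / (n : ℝ)) atTop (𝓝 1) := by
  have h : Tendsto (fun n : ℕ => 1 + c / (n : ℝ)) atTop (𝓝 (1 + 0)) :=
    tendsto_const_nhds.add (tendsto_const_nhds.div_atTop tendsto_natCast_atTop_atTop)
  rw [add_zero] at h
  refine h.congr' ?_
  filter_upwards [eventually_ge_atTop 1] with n hn
  have hn0 : (n : ℝ) ≠ 0 := by positivity
  field_simp

private lemma aux_rpow_ratio (c e : ℝ) :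
    Tendsto (fun n : ℕ => (((n : ℝ) + c) / (n : ℝ)) ^ e) atTop (𝓝 1) := by
  have := (aux_ratio_tendsto_one c).rpow_const (Or.inl one_ne_zero) (p := e)
  simpa using this

private lemma rec_limit {x c d : ℕ → ℝ} {r e : ℝ} (hr0 : 0 ≤ r) (hr1 : r < 1)
    (hrec : ∀ᶠ i in atTop, x (i + 1) = c i * x i + d i)
    (hc : Tendsto c atTop (𝓝 r)) (hd : Tendsto d atTop (𝓝 e)) :
    Tendsto x atTop (𝓝 (e / (1 - r))) := by
  set L := e / (1 - r) with hL
  have h1r : (0:ℝ) < 1 - r := by linarith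
  have heL : e = L * (1 - r) := by rw [hL]; field_simp
  set r' := (1 + r) / 2 with hr'
  have hr'0 : 0 ≤ r' := by rw [hr']; linarith
  have hr'1 : r' < 1 := by rw [hr']; linarith
  have hrr' : r < r' := by rw [hr']; linarith
  rw [Metric.tendsto_atTop]
  intro ε hε
  have hδ : Tendsto (fun i => c i * L + d i - L) atTop (𝓝 0) := by
    have h := ((hc.mul_const L).add hd).sub_const L
    have hval : r * L + e - L = 0 := by rw [heL]; ring
    rwa [hval] at h
  have hcb : ∀ᶠ i in atTop, |c i| ≤ r' := by
    have h2 := hc.eventually (Metric.ball_mem_nhds r (by linarith : (0:ℝ) < r' - r))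
    filter_upwards [h2] with i hi
    rw [Real.dist_eq] at hi
    have := abs_sub_abs_le_abs_sub (c i) r
    rw [abs_of_nonneg hr0] at this
    linarith [le_of_lt (lt_of_le_of_lt this (by linarith : |c i - r| < r' - r))]
  have hδb : ∀ᶠ i in atTop, |c i * L + d i - L| ≤ (1 - r') * (ε / 2) := by
    have h2 := hδ.eventually (Metric.ball_mem_nhds 0 (by nlinarith : (0:ℝ) < (1 - r') * (ε / 2)))
    filter_upwards [h2] with i hi
    rw [Real.dist_eq, sub_zero] at hi
    exact hi.le
  obtain ⟨N, hN⟩ := eventually_atTop.mp (hrec.and (hcb.and hδb))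
  have key : ∀ m : ℕ, |x (N + m) - L| ≤ r' ^ m * |x N - L| + ε / 2 := by
    intro m
    induction m with
    | zero => simp; linarith
    | succ m ih =>
      obtain ⟨h1, h2, h3⟩ := hN (N + m) (Nat.le_add_right N m)
      have heq : x (N + m + 1) - L = c (N + m) * (x (N + m) - L) + (c (N + m) * L + d (N + m) - L) := by
        rw [h1]; ring
      have habs : |x (N + m + 1) - L| ≤ |c (N + m)| * |x (N + m) - L| + |c (N + m) * L + d (N + m) - L| := by
        rw [heq]; exact (abs_add_le _ _).trans (by rw [abs_mul])
      have hb1 : |c (N + m)| * |x (N + m) - L| ≤ r' * |x (N + m) - L| :=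
        mul_le_mul_of_nonneg_right h2 (abs_nonneg _)
      have hb2 : r' * |x (N + m) - L| ≤ r' * (r' ^ m * |x N - L| + ε / 2) :=
        mul_le_mul_of_nonneg_left ih hr'0
      have : x (N + (m + 1)) = x (N + m + 1) := by ring_nf
      rw [this]
      calc |x (N + m + 1) - L| ≤ r' * (r' ^ m * |x N - L| + ε / 2) + (1 - r') * (ε / 2) := by linarith
        _ = r' ^ (m + 1) * |x N - L| + ε / 2 := by ring
  have hpow : Tendsto (fun m : ℕ => r' ^ m * |x N - L|) atTop (𝓝 0) := by
    simpa using (tendsto_pow_atTop_nhds_zero_of_lt_one hr'0 hr'1).mul_const |x N - L|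
  obtain ⟨M, hM⟩ := eventually_atTop.mp (hpow.eventually (Metric.ball_mem_nhds 0 (by linarith : (0:ℝ) < ε / 2)))
  refine ⟨N + M, fun n hn => ?_⟩
  have hn' : n = N + (n - N) := by omega
  have hMn : M ≤ n - N := by omega
  have h1 := key (n - N)
  have h2 := hM (n - N) hMn
  rw [Real.dist_eq, sub_zero] at h2
  have h2' : r' ^ (n - N) * |x N - L| < ε / 2 :=
    lt_of_le_of_lt (le_abs_self _) h2
  rw [Real.dist_eq, hn']
  linarith


private lemma prod_gamma (a : ℝ) (hk : ∀ k : ℕ, (2 - a) + (k : ℝ) ≠ 0) (m : ℕ) :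
    Real.Gamma (2 - a) * ∏ j ∈ Finset.range (m + 1), ((2 - a) + (j : ℝ)) =
      Real.Gamma ((m : ℝ) + 3 - a) := by
  induction m with
  | zero =>
    have h0 : (2 : ℝ) - a ≠ 0 := by simpa using hk 0
    rw [show ((0:ℕ) : ℝ) + 3 - a = (2 - a) + 1 by push_cast; ring, Real.Gamma_add_one h0]
    simp [mul_comm]
  | succ m ih =>
    rw [Finset.prod_range_succ, ← mul_assoc, ih]
    have hne : (m : ℝ) + 3 - a ≠ 0 := by
      have := hk (m + 1); push_cast at this ⊢; intro h; apply this; linarith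
    rw [show ((m + 1 : ℕ) : ℝ) + 3 - a = ((m : ℝ) + 3 - a) + 1 by push_cast; ring,
      Real.Gamma_add_one hne]
    push_cast; ring

private lemma gamma_ratio (a : ℝ) (hna : ∀ n : ℕ, 2 ≤ n → a ≠ (n : ℝ)) :
    Tendsto (fun n : ℕ => (n : ℝ) ^ (1 - a) * (Real.Gamma n / Real.Gamma ((n : ℝ) + 1 - a)))
      atTop (𝓝 1) := by
  have hk : ∀ k : ℕ, (2 - a) + (k : ℝ) ≠ 0 := by
    intro k h
    exact hna (k + 2) (by omega) (by push_cast; linarith)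
  have hG2 : Real.Gamma (2 - a) ≠ 0 := by
    refine Real.Gamma_ne_zero fun m h => ?_
    exact hk m (by rw [h]; ring)
  have hGm : ∀ m : ℕ, Real.Gamma ((m : ℝ) + 2 - a) ≠ 0 := by
    intro m
    refine Real.Gamma_ne_zero fun k h => ?_
    exact hna (m + 2 + k) (by omega) (by push_cast; linarith)
  -- B tends to 1
  have hB : Tendsto (fun m : ℕ => Real.GammaSeq (2 - a) m / Real.Gamma (2 - a)) atTop (𝓝 1) := by
    have := (Real.GammaSeq_tendsto_Gamma (2 - a)).div_const (Real.Gamma (2 - a))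
    rwa [div_self hG2] at this
  -- v tends to 1
  have hv : Tendsto (fun m : ℕ => (((m : ℝ) + (2 - a)) / (m : ℝ)) *
      ((((m : ℝ) + 1) / (m : ℝ)) ^ (1 - a))) atTop (𝓝 1) := by
    have := (aux_ratio_tendsto_one (2 - a)).mul (aux_rpow_ratio 1 (1 - a))
    simpa using this
  have hmul := hB.mul hv
  rw [mul_one] at hmul
  rw [← tendsto_add_atTop_iff_nat 1]
  refine hmul.congr' ?_
  filter_upwards [eventually_ge_atTop 1] with m hm
  have hm0 : (0 : ℝ) < (m : ℝ) := by exact_mod_cast Nat.pos_of_ne_zero (by omega)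
  have hGS : Real.GammaSeq (2 - a) m / Real.Gamma (2 - a) =
      (m : ℝ) ^ ((2 : ℝ) - a) * (m.factorial : ℝ) / Real.Gamma ((m : ℝ) + 3 - a) := by
    rw [Real.GammaSeq, ← prod_gamma a hk m, div_div]
    ring_nf
  have hGfact : Real.Gamma ((m : ℝ) + 1) = (m.factorial : ℝ) := Real.Gamma_nat_eq_factorial m
  have hGrec : Real.Gamma ((m : ℝ) + 3 - a) = ((m : ℝ) + 2 - a) * Real.Gamma ((m : ℝ) + 2 - a) := by
    rw [show (m : ℝ) + 3 - a = ((m : ℝ) + 2 - a) + 1 by ring, Real.Gamma_add_one]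
    have := hk m
    intro h; apply this; linarith [h]
  have hm2a : (m : ℝ) + 2 - a ≠ 0 := by have := hk m; intro h; apply this; linarith
  have hcast : ((m + 1 : ℕ) : ℝ) = (m : ℝ) + 1 := by push_cast; ring
  rw [hGS, hGrec]
  rw [hcast]
  have hsplit : (m : ℝ) ^ ((2 : ℝ) - a) = (m : ℝ) * (m : ℝ) ^ ((1 : ℝ) - a) := by
    rw [show (2 : ℝ) - a = 1 + (1 - a) by ring, Real.rpow_add hm0, Real.rpow_one]
  have hdiv : (((m : ℝ) + 1) / (m : ℝ)) ^ ((1:ℝ) - a) =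
      ((m : ℝ) + 1) ^ ((1:ℝ) - a) / (m : ℝ) ^ ((1:ℝ) - a) :=
    Real.div_rpow (by linarith) (le_of_lt hm0) _
  rw [hsplit, hdiv, show ((m:ℝ) + 1) + 1 - a = (m : ℝ) + 2 - a by ring, hGfact]
  have hmne : (m : ℝ) ≠ 0 := ne_of_gt hm0
  have hrne : (m : ℝ) ^ ((1:ℝ) - a) ≠ 0 := by positivity
  have hG := hGm m
  set G := Real.Gamma ((m : ℝ) + 2 - a) with hGdef
  set t := (m : ℝ) ^ ((1:ℝ) - a) with htdef
  set s := ((m : ℝ) + 1) ^ ((1:ℝ) - a) with hsdef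
  rw [show (m:ℝ) + (2 - a) = (m:ℝ) + 2 - a by ring]
  field_simp


private noncomputable def fct (a : ℝ) (j : ℕ) : ℝ :=
  (Real.Gamma j / Real.Gamma ((j : ℝ) + 1 - a)) ^ 2

private lemma sum_rec (ρ : ℝ) (f : ℕ → ℝ) (m : ℕ) :
    ∑ j ∈ Finset.Icc 1 (m + 2 - 1), ρ ^ (m + 2 - j) * f j =
      ρ * (∑ j ∈ Finset.Icc 1 (m + 1 - 1), ρ ^ (m + 1 - j) * f j) + ρ * f (m + 1) := by
  have h1 : m + 2 - 1 = m + 1 := rfl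
  have h2 : m + 1 - 1 = m := rfl
  rw [h1, h2, Finset.sum_Icc_succ_top (by omega : 1 ≤ m + 1), Finset.mul_sum,
    show m + 2 - (m + 1) = 1 by omega, pow_one]
  congr 1
  refine Finset.sum_congr rfl fun j hj => ?_
  rw [Finset.mem_Icc] at hj
  rw [show m + 2 - j = (m + 1 - j) + 1 by omega, pow_succ]
  ring

private lemma main_tendsto (a ρ : ℝ) (hna : ∀ n : ℕ, 2 ≤ n → a ≠ (n : ℝ))
    (hρ0 : 0 < ρ) (hρ1 : ρ < 1) :
    Tendsto (fun i : ℕ => (i : ℝ) ^ (2 - 2 * a) *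
      ∑ j ∈ Finset.Icc 1 (i - 1), ρ ^ (i - j) * fct a j) atTop (𝓝 (ρ / (1 - ρ))) := by
  have hg := gamma_ratio a hna
  -- u n = n^(2-2a) * fct a n → 1
  have hu : Tendsto (fun n : ℕ => (n : ℝ) ^ (2 - 2 * a) * fct a n) atTop (𝓝 1) := by
    have h := hg.mul hg
    rw [mul_one] at h
    refine h.congr' ?_
    filter_upwards [eventually_ge_atTop 1] with n hn
    have hn0 : (0 : ℝ) < (n : ℝ) := by exact_mod_cast Nat.pos_of_ne_zero (by omega)
    have : (n : ℝ) ^ ((1:ℝ) - a) * (n : ℝ) ^ ((1:ℝ) - a) = (n : ℝ) ^ ((2:ℝ) - 2 * a) := by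
      rw [← Real.rpow_add hn0, show (1 - a) + (1 - a) = 2 - 2 * a by ring]
    simp only [fct]
    rw [← this]; ring
  set e : ℝ := 2 - 2 * a with he
  set c : ℕ → ℝ := fun i => ρ * (((i : ℝ) + 1) / (i : ℝ)) ^ e with hcdef
  set d : ℕ → ℝ := fun i => c i * ((i : ℝ) ^ e * fct a i) with hddef
  have hkey : ∀ x : ℝ, 0 < x → ((x + 1) / x) ^ e * x ^ e = (x + 1) ^ e := by
    intro x hx
    rw [Real.div_rpow (by linarith) hx.le, div_mul_cancel₀]
    exact (Real.rpow_pos_of_pos hx e).ne'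
  have hc : Tendsto c atTop (𝓝 ρ) := by
    have := tendsto_const_nhds (x := ρ) (f := atTop (α := ℕ)) |>.mul (aux_rpow_ratio 1 e)
    simpa using this
  have hd : Tendsto d atTop (𝓝 ρ) := by
    have := hc.mul hu
    simpa using this
  set x : ℕ → ℝ := fun i : ℕ => (i : ℝ) ^ e *
      ∑ j ∈ Finset.Icc 1 (i - 1), ρ ^ (i - j) * fct a j with hxdef
  have hrec : ∀ᶠ i in atTop, x (i + 1) = c i * x i + d i := by
    filter_upwards [eventually_ge_atTop 1] with i hi
    obtain ⟨m, rfl⟩ : ∃ m, i = m + 1 := ⟨i - 1, by omega⟩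
    have hS := sum_rec ρ (fct a) m
    have hm0 : (0 : ℝ) < ((m + 1 : ℕ) : ℝ) := by positivity
    simp only [hxdef, hcdef, hddef]
    rw [hS]
    have hcast2 : ((m + 1 + 1 : ℕ) : ℝ) = ((m + 1 : ℕ) : ℝ) + 1 := by push_cast; ring
    rw [hcast2]
    have hk := hkey ((m + 1 : ℕ) : ℝ) hm0
    linear_combination -(ρ * ∑ j ∈ Finset.Icc 1 (m + 1 - 1), ρ ^ (m + 1 - j) * fct a j +
      ρ * fct a (m + 1)) * hk
  have hlim := rec_limit hρ0.le hρ1 hrec hc hd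
  exact hlim


/-- **Geometrically weighted Gamma-ratio sum decays at rate `i⁻²`** (Lemma 7):
for `0 < ρ < 1`,
`ρ/log(ρ⁻¹) ≤ liminf i^{2−2λμ} ∑_{j=1}^{i−1} ρ^{i−j} (Γ(j)/Γ(j+1−λμ))²`,
`limsup i^{2−2λμ} ∑_{j=1}^{i−1} ρ^{i−j} (Γ(j)/Γ(j+1−λμ))² ≤ 1/log(ρ⁻¹)`;
in particular `i^{−2λμ} ∑_{j=1}^{i−1} ρ^{i−j} (Γ(j)/Γ(j+1−λμ))²` is `Θ(i⁻²)`. -/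
theorem geometric_gamma_ratio_sum_rate (lam mu ρ : ℝ) (hlam : 0 < lam) (hmu : 0 < mu)
    (hnotint : ∀ n : ℕ, 2 ≤ n → lam * mu ≠ (n : ℝ))
    (hρ0 : 0 < ρ) (hρ1 : ρ < 1) :
    (ρ / Real.log ρ⁻¹ ≤ liminf (fun i : ℕ => (i : ℝ) ^ (2 - 2 * lam * mu) *
        ∑ j ∈ Finset.Icc 1 (i - 1), ρ ^ (i - j) *
          (Real.Gamma (j : ℝ) / Real.Gamma ((j : ℝ) + 1 - lam * mu)) ^ 2) atTop) ∧
    (limsup (fun i : ℕ => (i : ℝ) ^ (2 - 2 * lam * mu) *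
        ∑ j ∈ Finset.Icc 1 (i - 1), ρ ^ (i - j) *
          (Real.Gamma (j : ℝ) / Real.Gamma ((j : ℝ) + 1 - lam * mu)) ^ 2) atTop
      ≤ 1 / Real.log ρ⁻¹) ∧
    (∃ c₁ : ℝ, 0 < c₁ ∧ ∃ c₂ : ℝ, 0 < c₂ ∧ ∃ i₀ : ℕ, ∀ i : ℕ, i₀ ≤ i →
      c₁ * (i : ℝ) ^ (-2 : ℝ) ≤ (i : ℝ) ^ (-(2 * lam * mu)) *
        ∑ j ∈ Finset.Icc 1 (i - 1), ρ ^ (i - j) *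
          (Real.Gamma (j : ℝ) / Real.Gamma ((j : ℝ) + 1 - lam * mu)) ^ 2 ∧
      (i : ℝ) ^ (-(2 * lam * mu)) *
        ∑ j ∈ Finset.Icc 1 (i - 1), ρ ^ (i - j) *
          (Real.Gamma (j : ℝ) / Real.Gamma ((j : ℝ) + 1 - lam * mu)) ^ 2 ≤
        c₂ * (i : ℝ) ^ (-2 : ℝ)) := by
  have hρinv1 : 1 < ρ⁻¹ := by
    rw [lt_inv_comm₀] <;> simp [hρ0, hρ1]
  have hlog : 0 < Real.log ρ⁻¹ := Real.log_pos hρinv1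
  have hlogle : Real.log ρ⁻¹ ≤ ρ⁻¹ - 1 := Real.log_le_sub_one_of_pos (by positivity)
  have hloggeq : 1 - ρ ≤ Real.log ρ⁻¹ := by
    have h := Real.log_le_sub_one_of_pos hρ0
    rw [Real.log_inv]; linarith
  have hP := main_tendsto (lam * mu) ρ (fun n hn h => hnotint n hn h) hρ0 hρ1
  simp only [fct, show (2 : ℝ) - 2 * (lam * mu) = 2 - 2 * lam * mu from by ring] at hP
  set L : ℝ := ρ / (1 - ρ) with hLdef
  have hL0 : 0 < L := div_pos hρ0 (by linarith)
  refine ⟨?_, ?_, ?_⟩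
  · rw [hP.liminf_eq]
    apply div_le_div_of_nonneg_left hρ0.le (by linarith : (0:ℝ) < 1 - ρ) hloggeq
  · rw [hP.limsup_eq, hLdef, div_le_div_iff₀ (by linarith : (0:ℝ) < 1 - ρ) hlog]
    have h2 := mul_le_mul_of_nonneg_left hlogle hρ0.le
    have h3 : ρ * (ρ⁻¹ - 1) = 1 - ρ := by field_simp
    nlinarith
  · obtain ⟨N, hN⟩ := Metric.tendsto_atTop.mp hP (L / 2) (by positivity)
    refine ⟨L / 2, by positivity, 2 * L, by positivity, max N 1, fun i hi => ?_⟩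
    have hiN := hN i (le_trans (le_max_left _ _) hi)
    have hi1 : 1 ≤ i := le_trans (le_max_right _ _) hi
    have hipos : (0 : ℝ) < (i : ℝ) := by exact_mod_cast Nat.pos_of_ne_zero (by omega)
    rw [Real.dist_eq, abs_lt] at hiN
    have hsplit : (i : ℝ) ^ (-(2 * lam * mu)) =
        (i : ℝ) ^ (-2 : ℝ) * (i : ℝ) ^ (2 - 2 * lam * mu) := by
      rw [← Real.rpow_add hipos]; congr 1; ring
    have hp2 : (0 : ℝ) < (i : ℝ) ^ (-2 : ℝ) := Real.rpow_pos_of_pos hipos _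
    rw [hsplit, mul_assoc]
    constructor
    · rw [mul_comm (L / 2)]
      apply mul_le_mul_of_nonneg_left _ hp2.le
      linarith [hiN.1]
    · rw [mul_comm (2 * L)]
      apply mul_le_mul_of_nonneg_left _ hp2.le
      linarith [hiN.2]
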